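/- Define h_i(λ) = −discr(𝒞_i(λ)) = 4·det 𝒞_i(λ) − (tr 𝒞_i(λ))² for i = 0, 1, …, N−1, where 𝒞_i(λ) = α_{i−1}·𝒟_i + α_{i−1}·Ĉ^i(λ). Then for every i ∈ {0, …, N−1} and every λ ∈ ℝ: (1) the conjugation identity (1/α_i)·(B̂^i(0))⁻¹·𝒞_{i+1}(λ)·B̂^i(0) = (1/α_{i−1})·𝒞_i(λ) holds; (2) h₀(λ) = (r₀·r₁·⋯·r_{i−1})²·h_i(λ). -/

import Mathlib

/-- The product `C (n₀ + len - 1) * ⋯ * C n₀` of real matrices, larger indices on the left. -/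
def prodDesc (C : ℤ → Matrix (Fin 2) (Fin 2) ℝ) (n₀ : ℤ) : ℕ → Matrix (Fin 2) (Fin 2) ℝ
  | 0 => 1
  | len + 1 => C (n₀ + len) * prodDesc C n₀ len

def Bmat (r q : ℤ → ℝ) (j : ℤ) : Matrix (Fin 2) (Fin 2) ℝ := !![0, 1; -r j, -q j]

noncomputable def Bder (α : ℤ → ℝ) (j : ℤ) : Matrix (Fin 2) (Fin 2) ℝ := !![0, 0; 0, 1 / α j]

noncomputable def Tder (r q α : ℤ → ℝ) (i : ℤ) : ℕ → Matrix (Fin 2) (Fin 2) ℝ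
  | 0 => 0
  | n + 1 => Bder α (i + n) * prodDesc (Bmat r q) i n + Bmat r q (i + n) * Tder r q α i n

noncomputable def uSeq (α β : ℤ → ℝ) (k : ℕ) : ℕ → ℝ
  | 0 => 1
  | 1 => -β k / α k
  | n + 2 => -(α ((n : ℤ) + k) * uSeq α β k n + β ((n : ℤ) + 1 + k) * uSeq α β k (n + 1))
      / α ((n : ℤ) + 1 + k)

noncomputable def vSeq (α β : ℤ → ℝ) (k : ℕ) : ℕ → ℝ
  | 0 => 0
  | 1 => 1 / α k
  | n + 2 => (uSeq α β k (n + 1) - α ((n : ℤ) + k) * vSeq α β k n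
      - β ((n : ℤ) + 1 + k) * vSeq α β k (n + 1)) / α ((n : ℤ) + 1 + k)

lemma prodDesc_succ (C : ℤ → Matrix (Fin 2) (Fin 2) ℝ) (n₀ : ℤ) (n : ℕ) :
    prodDesc C n₀ (n + 1) = C (n₀ + n) * prodDesc C n₀ n := rfl

lemma Tder_succ (r q α : ℤ → ℝ) (i : ℤ) (n : ℕ) :
    Tder r q α i (n + 1)
      = Bder α (i + n) * prodDesc (Bmat r q) i n + Bmat r q (i + n) * Tder r q α i n := rfl

lemma prodDesc_bot (C : ℤ → Matrix (Fin 2) (Fin 2) ℝ) (n₀ : ℤ) (n : ℕ) :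
    prodDesc C n₀ (n + 1) = prodDesc C (n₀ + 1) n * C n₀ := by
  induction n with
  | zero => simp [prodDesc]
  | succ n ih =>
      rw [prodDesc_succ, ih, prodDesc_succ, Matrix.mul_assoc]
      congr 2
      push_cast; ring

lemma det_prodDesc (C : ℤ → Matrix (Fin 2) (Fin 2) ℝ) (n₀ : ℤ) (n : ℕ) :
    (prodDesc C n₀ n).det = ∏ m ∈ Finset.range n, (C (n₀ + m)).det := by
  induction n with
  | zero => simp [prodDesc]
  | succ n ih => rw [prodDesc_succ, Matrix.det_mul, ih, Finset.prod_range_succ]; ring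

lemma natRed {N : ℕ} (hN : 0 < N) (P : ℕ → Prop) (hbase : ∀ n < N, P n)
    (hstep : ∀ n, N ≤ n → P (n - N) → P n) : ∀ n, P n := by
  intro n
  induction n using Nat.strong_induction_on with
  | _ n ih =>
      rcases lt_or_ge n N with hn | hn
      · exact hbase n hn
      · exact hstep n hn (ih (n - N) (by omega))

lemma Tder_bot (r q α : ℤ → ℝ) (i : ℤ) (n : ℕ) :
    Tder r q α i (n + 1)
      = Tder r q α (i + 1) n * Bmat r q i + prodDesc (Bmat r q) (i + 1) n * Bder α i := by
  induction n with
  | zero => simp [Tder_succ, Tder, prodDesc]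
  | succ n ih =>
      rw [Tder_succ, ih, prodDesc_bot, Tder_succ, prodDesc_succ]
      have e : i + (n + 1 : ℕ) = i + 1 + (n : ℕ) := by push_cast; ring
      rw [e]
      noncomm_ring

set_option maxHeartbeats 1000000 in
lemma formulaUV (r q α β : ℤ → ℝ)
    (hβdef : ∀ j, β j = α j * q j)
    (hrz : ∀ x : ℤ, -1 ≤ x → r (x + 1) = α x / α (x + 1))
    (hαnez : ∀ x : ℤ, -1 ≤ x → α x ≠ 0) :
    ∀ (i n : ℕ),
      prodDesc (Bmat r q) i (n + 2)
        = !![-(α ((i:ℤ) - 1) / α i) * uSeq α β (i+1) n, uSeq α β i (n+1);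
             -(α ((i:ℤ) - 1) / α i) * uSeq α β (i+1) (n+1), uSeq α β i (n+2)] ∧
      Tder r q α i (n + 2)
        = !![-(α ((i:ℤ) - 1) / α i) * vSeq α β (i+1) n, vSeq α β i (n+1);
             -(α ((i:ℤ) - 1) / α i) * vSeq α β (i+1) (n+1), vSeq α β i (n+2)] := by
  intro i n
  have hne0 : α (i : ℤ) ≠ 0 := hαnez _ (by omega)
  have hr0 : r (i : ℤ) = α ((i : ℤ) - 1) / α (i : ℤ) := by
    simpa using hrz ((i : ℤ) - 1) (by omega)
  simp only [sub_eq_add_neg, Int.reduceNeg, add_comm, add_left_comm, add_assoc] at hr0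
  induction n with
  | zero =>
      have hne1 : α ((i : ℤ) + 1) ≠ 0 := hαnez _ (by omega)
      have hr1 : r ((i : ℤ) + 1) = α (i : ℤ) / α ((i : ℤ) + 1) := hrz (i : ℤ) (by omega)
      have hne1' := hne1
      have hr1' := hr1
      simp -failIfUnchanged only [sub_eq_add_neg, Int.reduceNeg, add_comm, add_left_comm, add_assoc]
        at hne1' hr1'
      constructor <;>
      · ext a b
        fin_cases a <;> fin_cases b <;>
        · simp [prodDesc, Tder_succ, Tder, Bmat, Bder, uSeq, vSeq,
            Matrix.mul_apply, Fin.sum_univ_two]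
          try simp only [hβdef]
          try simp only [sub_eq_add_neg, Int.reduceNeg, add_comm, add_left_comm, add_assoc]
          try rw [hr0]
          try rw [hr1]
          try rw [hr1']
          try field_simp
          try ring
          try tauto
  | succ n ih =>
      have hne1 : α ((i : ℤ) + n + 1) ≠ 0 := hαnez _ (by omega)
      have hne2 : α ((i : ℤ) + n + 2) ≠ 0 := hαnez _ (by omega)
      have hrs : r ((i : ℤ) + n + 2) = α ((i : ℤ) + n + 1) / α ((i : ℤ) + n + 2) := by
        rw [show (i : ℤ) + n + 2 = (i : ℤ) + n + 1 + 1 by ring]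
        exact hrz ((i : ℤ) + n + 1) (by omega)
      have hne1' := hne1
      have hne2' := hne2
      have hrs' := hrs
      simp only [sub_eq_add_neg, Int.reduceNeg, add_comm, add_left_comm, add_assoc]
        at hne1' hne2' hrs'
      obtain ⟨ihv, ihd⟩ := ih
      constructor
      · rw [show n + 1 + 2 = (n + 2) + 1 from rfl, prodDesc_succ, ihv]
        ext a b
        fin_cases a <;> fin_cases b <;>
        · simp [Bmat, uSeq, Matrix.mul_apply, Fin.sum_univ_two]
          try simp only [hβdef]
          try simp only [sub_eq_add_neg, Int.reduceNeg, add_comm, add_left_comm, add_assoc,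
            one_add_one_eq_two]
          try rw [hrs]
          try rw [hrs']
          try field_simp
          try ring
          try tauto
      · rw [show n + 1 + 2 = (n + 2) + 1 from rfl, Tder_succ, ihv, ihd]
        ext a b
        fin_cases a <;> fin_cases b <;>
        · simp [Bmat, Bder, uSeq, vSeq, Matrix.mul_apply, Fin.sum_univ_two]
          try simp only [hβdef]
          try simp only [sub_eq_add_neg, Int.reduceNeg, add_comm, add_left_comm, add_assoc,
            one_add_one_eq_two]
          try rw [hrs]
          try rw [hrs']
          try field_simp
          try ring
          try tauto



set_option maxHeartbeats 1000000 in
theorem stmt15 (N : ℕ) (hN : 2 ≤ N)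
    (r q : ℤ → ℝ) (hrpos : ∀ i, 0 < r i)
    (hrper : ∀ i, r (i + N) = r i) (hqper : ∀ i, q (i + N) = q i)
    (γ : ℝ) (hγ : γ = -1 ∨ γ = 1)
    (hProd : prodDesc (fun i => !![0, 1; -r i, -q i]) 0 N
      = γ • (1 : Matrix (Fin 2) (Fin 2) ℝ))
    -- the modulating sequences α, β built from r and q
    (α β : ℤ → ℝ)
    (hαper : ∀ j, α (j + N) = α j) (hβper : ∀ j, β (j + N) = β j)
    (hαdef : ∀ i : ℕ, i < N → α i = ∏ k ∈ Finset.Ico (i + 1) N, r k)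
    (hβdef : ∀ j, β j = α j * q j)
    -- `W k n` is the orthonormal polynomial `w_n^{[k]}` associated with the shifted sequences
    (W : ℕ → ℕ → ℝ → ℝ)
    (hW0 : ∀ (k : ℕ) (x : ℝ), W k 0 x = 1)
    (hW1 : ∀ (k : ℕ) (x : ℝ), W k 1 x = (x - β k) / α k)
    (hWrec : ∀ k : ℕ, ∀ n : ℕ, 1 ≤ n → ∀ x : ℝ,
      α ((n : ℤ) + k - 1) * W k (n - 1) x + β ((n : ℤ) + k) * W k n x
        + α ((n : ℤ) + k) * W k (n + 1) x = x * W k n x)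
    (s z : ℕ → ℝ) (hsper : ∀ n, s (n + N) = s n) (hzper : ∀ n, z (n + N) = z n)
    -- the matrices `𝒞_i(λ) = α_{i−1} 𝒟_i + α_{i−1} Ĉ^i(λ)`
    (Cl : ℕ → ℝ → Matrix (Fin 2) (Fin 2) ℝ)
    (hCl : ∀ (i : ℕ) (w : ℝ), Cl i w = α ((i : ℤ) - 1) •
      ((∑ j ∈ Finset.range N, (1 / α ((i : ℤ) + j)) •
          (prodDesc (fun t => !![0, 1; -r t, -q t]) ((i : ℤ) + j + 1) (N - 1 - j)
            * !![0, 0; s (i + j), z (i + j)]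
            * prodDesc (fun t => !![0, 1; -r t, -q t]) (i : ℤ) j))
        + w • !![-(α ((i : ℤ) - 1) / α (i : ℤ)) * deriv (W (i + 1) (N - 2)) 0,
                  deriv (W i (N - 1)) 0;
                 -(α ((i : ℤ) - 1) / α (i : ℤ)) * deriv (W (i + 1) (N - 1)) 0,
                  deriv (W i N) 0]))
    -- the functions `h_i = −discr(𝒞_i)`
    (h : ℕ → ℝ → ℝ)
    (hh : ∀ (i : ℕ) (w : ℝ), h i w = 4 * (Cl i w).det - ((Cl i w).trace) ^ 2) :
    ∀ i < N, ∀ w : ℝ,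
      (1 / α (i : ℤ)) • ((!![0, 1; -r (i : ℤ), -q (i : ℤ)])⁻¹ * Cl (i + 1) w
          * !![0, 1; -r (i : ℤ), -q (i : ℤ)])
        = (1 / α ((i : ℤ) - 1)) • Cl i w ∧
      h 0 w = (∏ k ∈ Finset.range i, r k) ^ 2 * h i w := by
  have hBm : (fun i => !![0, 1; -r i, -q i]) = Bmat r q := rfl
  rw [hBm] at hProd
  -- the product of all r over a period is 1
  have hγ2 : γ ^ 2 = 1 := by rcases hγ with h | h <;> rw [h] <;> norm_num
  have hr1 : ∏ m ∈ Finset.range N, r m = 1 := by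
    have hd := congrArg Matrix.det hProd
    rw [det_prodDesc] at hd
    simp only [Bmat, Matrix.det_fin_two_of, Matrix.det_smul, Matrix.det_one,
      Fintype.card_fin, zero_add] at hd
    calc ∏ m ∈ Finset.range N, r m = ∏ m ∈ Finset.range N, (0 * -q m - 1 * -r m) := by
          apply Finset.prod_congr rfl; intro m _; ring
      _ = 1 := by rw [hd, hγ2, mul_one]
  -- positivity of α on naturals
  have hαpos : ∀ n : ℕ, 0 < α n := by
    refine natRed (N := N) (by omega) _ (fun n hn => ?_) (fun n hn ih => ?_)
    · rw [hαdef n hn]; exact Finset.prod_pos fun k _ => hrpos _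
    · have e : ((n - N : ℕ) : ℤ) + N = (n : ℤ) := by omega
      rwa [← e, hαper]
  have hαm1 : α (-1) = 1 := by
    have e : (-1 : ℤ) + N = ((N - 1 : ℕ) : ℤ) := by omega
    rw [← hαper (-1), e, hαdef (N - 1) (by omega)]
    have : N - 1 + 1 = N := by omega
    rw [this, Finset.Ico_self, Finset.prod_empty]
  have hαpos' : ∀ n : ℕ, 0 < α ((n : ℤ) - 1) := by
    intro n
    match n with
    | 0 => simpa [hαm1] using one_pos
    | m + 1 =>
        have e : ((m + 1 : ℕ) : ℤ) - 1 = (m : ℤ) := by omega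
        rw [e]; exact hαpos m
  -- the ratio identity α (n-1) = r n * α n
  have hrho : ∀ n : ℕ, α ((n : ℤ) - 1) = r n * α n := by
    refine natRed (N := N) (by omega) _ (fun n hn => ?_) (fun n hn ih => ?_)
    · match n with
      | 0 =>
          have h0 : α ((0 : ℕ) : ℤ) = ∏ k ∈ Finset.Ico 1 N, r k :=
            hαdef 0 (by omega)
          simp only [Nat.cast_zero, zero_sub, hαm1] at h0 ⊢
          rw [h0, ← hr1, Finset.range_eq_Ico,
            Finset.prod_eq_prod_Ico_succ_bot (by omega : 0 < N)]
          norm_num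
      | m + 1 =>
          have e : ((m + 1 : ℕ) : ℤ) - 1 = (m : ℤ) := by omega
          rw [e, hαdef m (by omega), hαdef (m + 1) hn,
            Finset.prod_eq_prod_Ico_succ_bot (by omega : m + 1 < N)]
    · have e1 : ((n - N : ℕ) : ℤ) - 1 + N = (n : ℤ) - 1 := by omega
      have e2 : ((n - N : ℕ) : ℤ) + N = (n : ℤ) := by omega
      rw [← e1, ← e2, hαper, hrper, hαper]
      exact ih
  -- periodicity of B
  have hBper : ∀ j : ℤ, Bmat r q (j + N) = Bmat r q j := by
    intro j; simp [Bmat, hrper, hqper]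
  have hBderper : ∀ j : ℤ, Bder α (j + N) = Bder α j := by
    intro j; simp [Bder, hαper]
  have hdetB : ∀ j : ℤ, (Bmat r q j).det = r j := by
    intro j; simp [Bmat, Matrix.det_fin_two_of]
  have hdetBu : ∀ j : ℤ, IsUnit (Bmat r q j).det := by
    intro j; rw [hdetB]; exact (hrpos j).ne'.isUnit
  -- full-period products
  have hfull : ∀ i : ℕ, prodDesc (Bmat r q) i N = γ • 1 := by
    intro i
    induction i with
    | zero => exact hProd
    | succ i ih =>
        have e1 : prodDesc (Bmat r q) i (N + 1)
            = Bmat r q i * (γ • 1) := by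
          rw [prodDesc_succ, hBper, ih]
        have e2 : prodDesc (Bmat r q) i (N + 1)
            = prodDesc (Bmat r q) ((i : ℤ) + 1) N * Bmat r q i := prodDesc_bot _ _ _
        have e3 : prodDesc (Bmat r q) ((i : ℤ) + 1) N * Bmat r q i
            = (γ • 1) * Bmat r q i := by
          rw [← e2, e1]
          rw [Matrix.mul_smul, Matrix.smul_mul, Matrix.mul_one, Matrix.one_mul]
        have e4 := congrArg (fun M => M * (Bmat r q i)⁻¹) e3
        simp only [Matrix.mul_nonsing_inv_cancel_right _ _ (hdetBu i)] at e4
        have ec : ((i + 1 : ℕ) : ℤ) = (i : ℤ) + 1 := by push_cast; ring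
        rw [ec]
        exact e4
  -- conjugation for the derivative matrices
  have hTconj : ∀ i : ℕ,
      Bmat r q i * Tder r q α i N = Tder r q α ((i : ℤ) + 1) N * Bmat r q i := by
    intro i
    have e1 : Tder r q α i (N + 1)
        = Bder α i * (γ • 1) + Bmat r q i * Tder r q α i N := by
      rw [Tder_succ, hBper, hBderper, hfull]
    have e2 : Tder r q α i (N + 1)
        = Tder r q α ((i : ℤ) + 1) N * Bmat r q i
          + (γ • 1) * Bder α i := by
      rw [Tder_bot]
      congr 1
      have ec : ((i + 1 : ℕ) : ℤ) = (i : ℤ) + 1 := by push_cast; ring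
      rw [← ec, hfull]
    have e3 : Bder α i * (γ • 1) = (γ • 1) * Bder α i := by
      rw [Matrix.mul_smul, Matrix.smul_mul, Matrix.mul_one, Matrix.one_mul]
    have := e1.symm.trans e2
    rw [e3] at this
    rw [add_comm] at this
    exact add_right_cancel this
  -- link between W and the recursively defined value/derivative sequences
  have hWl : ∀ k n : ℕ, W k n 0 = uSeq α β k n ∧ HasDerivAt (W k n) (vSeq α β k n) 0 := by
    intro k
    have main : ∀ n : ℕ,
        (W k n 0 = uSeq α β k n ∧ HasDerivAt (W k n) (vSeq α β k n) 0) ∧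
        (W k (n + 1) 0 = uSeq α β k (n + 1) ∧
          HasDerivAt (W k (n + 1)) (vSeq α β k (n + 1)) 0) := by
      intro n
      induction n with
      | zero =>
          have h0f : W k 0 = fun _ => 1 := funext (hW0 k)
          have h1f : W k 1 = fun x => (x - β k) / α k := funext (hW1 k)
          refine ⟨⟨?_, ?_⟩, ?_, ?_⟩
          · rw [hW0]; simp [uSeq]
          · rw [h0f]; simpa [vSeq] using hasDerivAt_const (0 : ℝ) (1 : ℝ)
          · rw [hW1]; simp [uSeq]
          · rw [h1f]
            have hder : HasDerivAt (fun x : ℝ => (x - β k) / α k) (1 / α k) 0 := by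
              simpa using ((hasDerivAt_id (0 : ℝ)).sub_const (β k)).div_const (α k)
            simpa [vSeq] using hder
      | succ n ih =>
          have hne : α ((n : ℤ) + 1 + k) ≠ 0 := by
            have e : ((n : ℤ) + 1 + k) = ((n + 1 + k : ℕ) : ℤ) := by push_cast; ring
            rw [e]; exact (hαpos _).ne'
          have hfun : W k (n + 2) = fun x => (x * W k (n + 1) x - α ((n : ℤ) + k) * W k n x
              - β ((n : ℤ) + 1 + k) * W k (n + 1) x) / α ((n : ℤ) + 1 + k) := by
            funext x
            have hrec := hWrec k (n + 1) (by omega) x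
            have e1 : ((n + 1 : ℕ) : ℤ) + k - 1 = (n : ℤ) + k := by push_cast; ring
            have e2 : ((n + 1 : ℕ) : ℤ) + k = (n : ℤ) + 1 + k := by push_cast; ring
            have e3 : n + 1 - 1 = n := by omega
            rw [e1, e2, e3] at hrec
            rw [eq_div_iff hne]
            linear_combination hrec
          refine ⟨ih.2, ?_, ?_⟩
          · have hv := congrFun hfun 0
            rw [hv, ih.1.1, ih.2.1]
            simp only [uSeq]
            ring
          · have hd : HasDerivAt (fun x => (x * W k (n + 1) x - α ((n : ℤ) + k) * W k n x
                - β ((n : ℤ) + 1 + k) * W k (n + 1) x) / α ((n : ℤ) + 1 + k))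
                ((1 * W k (n + 1) 0 + 0 * vSeq α β k (n + 1)
                  - α ((n : ℤ) + k) * vSeq α β k n
                  - β ((n : ℤ) + 1 + k) * vSeq α β k (n + 1)) / α ((n : ℤ) + 1 + k)) 0 :=
              ((((hasDerivAt_id 0).mul ih.2.2).sub ((ih.1.2).const_mul _)).sub
                ((ih.2.2).const_mul _)).div_const _
            have hveq : vSeq α β k (n + 2) = (1 * W k (n + 1) 0 + 0 * vSeq α β k (n + 1)
                - α ((n : ℤ) + k) * vSeq α β k n
                - β ((n : ℤ) + 1 + k) * vSeq α β k (n + 1)) / α ((n : ℤ) + 1 + k) := by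
              rw [ih.2.1]
              simp only [vSeq]
              ring
            rw [hfun, hveq]
            exact hd
    intro n
    exact (main n).1
  -- nonvanishing of α and the ratio form of r
  have hαnez : ∀ x : ℤ, -1 ≤ x → α x ≠ 0 := by
    intro x hx
    rcases eq_or_lt_of_le hx with hx1 | hx1
    · rw [← hx1, hαm1]; norm_num
    · obtain ⟨m, rfl⟩ := Int.eq_ofNat_of_zero_le (by omega : 0 ≤ x)
      exact (hαpos m).ne'
  have hrz : ∀ x : ℤ, -1 ≤ x → r (x + 1) = α x / α (x + 1) := by
    intro x hx
    obtain ⟨m, hmx⟩ : ∃ m : ℕ, (m : ℤ) = x + 1 := ⟨(x + 1).toNat, by omega⟩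
    rw [eq_div_iff (by rw [← hmx]; exact (hαpos m).ne')]
    rw [← hmx, ← show (m : ℤ) - 1 = x from by omega]
    exact (hrho m).symm
  have hform := formulaUV r q α β hβdef hrz hαnez
  -- conjugation identity for the zero-order sums
  have hDconj : ∀ i : ℕ,
      Bmat r q i * (∑ j ∈ Finset.range N, (1 / α ((i:ℤ) + j)) •
          (prodDesc (Bmat r q) ((i:ℤ) + j + 1) (N - 1 - j) * !![0, 0; s (i + j), z (i + j)]
            * prodDesc (Bmat r q) (i:ℤ) j))
        = (∑ j ∈ Finset.range N, (1 / α ((i:ℤ) + 1 + j)) •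
          (prodDesc (Bmat r q) ((i:ℤ) + 1 + j + 1) (N - 1 - j)
            * !![0, 0; s (i + 1 + j), z (i + 1 + j)]
            * prodDesc (Bmat r q) ((i:ℤ) + 1) j)) * Bmat r q i := by
    intro i
    obtain ⟨M, hMN⟩ : ∃ M, N = M + 1 := ⟨N - 1, by omega⟩
    rw [Finset.mul_sum, Finset.sum_mul]
    have hstep1 : ∀ j ∈ Finset.range N,
        Bmat r q i * ((1 / α ((i:ℤ) + j)) •
          (prodDesc (Bmat r q) ((i:ℤ) + j + 1) (N - 1 - j) * !![0, 0; s (i + j), z (i + j)]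
            * prodDesc (Bmat r q) (i:ℤ) j))
        = (1 / α ((i:ℤ) + j)) •
          (prodDesc (Bmat r q) ((i:ℤ) + j + 1) (N - j) * !![0, 0; s (i + j), z (i + j)]
            * prodDesc (Bmat r q) (i:ℤ) j) := by
      intro j hj
      have hj' : j < N := Finset.mem_range.mp hj
      have e1 : N - j = (N - 1 - j) + 1 := by omega
      have e2 : (i:ℤ) + j + 1 + ((N - 1 - j : ℕ) : ℤ) = (i:ℤ) + N := by
        push_cast [Nat.cast_sub (by omega : j ≤ N - 1), Nat.cast_sub (by omega : 1 ≤ N)]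
        ring
      rw [e1, prodDesc_succ, e2, hBper]
      rw [Matrix.mul_smul, ← Matrix.mul_assoc, ← Matrix.mul_assoc]
    have hstep2 : ∀ j ∈ Finset.range N,
        ((1 / α ((i:ℤ) + 1 + j)) •
          (prodDesc (Bmat r q) ((i:ℤ) + 1 + j + 1) (N - 1 - j)
            * !![0, 0; s (i + 1 + j), z (i + 1 + j)]
            * prodDesc (Bmat r q) ((i:ℤ) + 1) j)) * Bmat r q i
        = (1 / α ((i:ℤ) + ((j + 1 : ℕ) : ℤ))) •
          (prodDesc (Bmat r q) ((i:ℤ) + ((j + 1 : ℕ) : ℤ) + 1) (N - (j + 1))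
            * !![0, 0; s (i + (j + 1)), z (i + (j + 1))]
            * prodDesc (Bmat r q) (i:ℤ) (j + 1)) := by
      intro j hj
      rw [Matrix.smul_mul, Matrix.mul_assoc, ← prodDesc_bot]
      have e3 : (i:ℤ) + 1 + j = (i:ℤ) + ((j + 1 : ℕ) : ℤ) := by push_cast; ring
      have e4 : (i:ℤ) + 1 + j + 1 = (i:ℤ) + ((j + 1 : ℕ) : ℤ) + 1 := by push_cast; ring
      have e5 : i + 1 + j = i + (j + 1) := by omega
      have e6 : N - 1 - j = N - (j + 1) := by omega
      rw [e4, e3, e5, e6]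
    rw [Finset.sum_congr rfl hstep1, Finset.sum_congr rfl hstep2]
    rw [hMN, Finset.sum_range_succ', Finset.sum_range_succ]
    congr 1
    -- boundary terms
    have eα : α ((i:ℤ) + ((M + 1 : ℕ) : ℤ)) = α (i:ℤ) := by
      push_cast [← hMN]
      rw [hαper]
    have es : s (i + (M + 1)) = s i := by rw [← hMN]; exact hsper i
    have ez : z (i + (M + 1)) = z i := by rw [← hMN]; exact hzper i
    have efull1 : prodDesc (Bmat r q) ((i:ℤ) + 1) (M + 1) = γ • 1 := by
      have h2 := hfull (i + 1)
      rw [hMN] at h2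
      rwa [show ((i + 1 : ℕ) : ℤ) = (i:ℤ) + 1 from by push_cast; ring] at h2
    have efull2 : prodDesc (Bmat r q) (i:ℤ) (M + 1) = γ • 1 := by
      have h2 := hfull i
      rw [hMN] at h2
      exact h2
    rw [show M + 1 - (M + 1) = 0 from by omega]
    rw [show (prodDesc (Bmat r q) ((i:ℤ) + ((M + 1 : ℕ) : ℤ) + 1) 0) = 1 from rfl]
    rw [show (prodDesc (Bmat r q) (i:ℤ) 0) = 1 from rfl]
    simp only [Nat.cast_zero, add_zero, Nat.add_zero, Nat.sub_zero]
    rw [eα, es, ez, efull1, efull2]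
    simp [Matrix.smul_mul, Matrix.mul_smul]
  -- identification of the λ-linear matrices with `Tder`
  have hMmatch : ∀ i : ℕ,
      !![-(α ((i:ℤ) - 1) / α (i:ℤ)) * deriv (W (i + 1) (N - 2)) 0,
          deriv (W i (N - 1)) 0;
         -(α ((i:ℤ) - 1) / α (i:ℤ)) * deriv (W (i + 1) (N - 1)) 0,
          deriv (W i N) 0] = Tder r q α i N := by
    intro i
    have hT := (hform i (N - 2)).2
    rw [show N - 2 + 2 = N from by omega] at hT
    rw [hT, show N - 2 + 1 = N - 1 from by omega]
    rw [((hWl (i + 1) (N - 2)).2).deriv, ((hWl (i + 1) (N - 1)).2).deriv,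
      ((hWl i (N - 1)).2).deriv, ((hWl i N).2).deriv]
  -- representation of Cl with the conjugation property
  have hXrep : ∀ (i : ℕ) (w : ℝ), ∃ X X' : Matrix (Fin 2) (Fin 2) ℝ,
      Cl i w = α ((i:ℤ) - 1) • X ∧ Cl (i + 1) w = α (i:ℤ) • X' ∧
      Bmat r q i * X = X' * Bmat r q i := by
    intro i w
    have hBm2 : (fun t : ℤ => !![0, 1; -r t, -q t]) = Bmat r q := rfl
    have hXi := hCl i w
    rw [hBm2, hMmatch i] at hXi
    have hXi1 := hCl (i + 1) w
    rw [hBm2, hMmatch (i + 1)] at hXi1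
    have ecast : ((i + 1 : ℕ) : ℤ) = (i:ℤ) + 1 := by push_cast; ring
    rw [ecast] at hXi1
    rw [show (i:ℤ) + 1 - 1 = (i:ℤ) from by ring] at hXi1
    refine ⟨_, _, hXi, hXi1, ?_⟩
    rw [Matrix.mul_add, Matrix.add_mul, hDconj i, Matrix.mul_smul, Matrix.smul_mul,
      hTconj i]
  -- part (1) of the statement, for every natural i
  have hpart1 : ∀ (i : ℕ) (w : ℝ),
      (1 / α (i:ℤ)) • ((Bmat r q i)⁻¹ * Cl (i + 1) w * Bmat r q i)
        = (1 / α ((i:ℤ) - 1)) • Cl i w := by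
    intro i w
    obtain ⟨X, X', e1, e2, ekey⟩ := hXrep i w
    rw [e1, e2]
    rw [Matrix.mul_smul, Matrix.smul_mul, smul_smul, smul_smul,
      one_div_mul_cancel (hαnez (i:ℤ) (by omega)),
      one_div_mul_cancel (hαnez ((i:ℤ) - 1) (by omega)), one_smul, one_smul]
    rw [Matrix.mul_assoc, ← ekey]
    exact Matrix.nonsing_inv_mul_cancel_left _ _ (hdetBu i)
  -- the one-step relation for h
  have hstep2 : ∀ (i : ℕ) (w : ℝ), h i w = (r (i:ℤ)) ^ 2 * h (i + 1) w := by
    intro i w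
    obtain ⟨X, X', e1, e2, ekey⟩ := hXrep i w
    have hX' : X' = Bmat r q i * X * (Bmat r q i)⁻¹ := by
      rw [← Matrix.mul_nonsing_inv_cancel_right (Bmat r q i) X' (hdetBu i), ekey]
    have htr : X'.trace = X.trace := by
      rw [hX', Matrix.trace_mul_comm, Matrix.nonsing_inv_mul_cancel_left _ _ (hdetBu i)]
    have hdet : X'.det = X.det := by
      have hd := congrArg Matrix.det ekey
      rw [Matrix.det_mul, Matrix.det_mul] at hd
      have hBdne : (Bmat r q (i:ℤ)).det ≠ 0 := by rw [hdetB]; exact (hrpos _).ne'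
      exact mul_right_cancel₀ hBdne (by linear_combination (-1 : ℝ) * hd)
    have ecast : ((i + 1 : ℕ) : ℤ) = (i:ℤ) + 1 := by push_cast; ring
    rw [hh i w, hh (i + 1) w, e1, e2, Matrix.trace_smul, Matrix.trace_smul,
      Matrix.det_smul, Matrix.det_smul, htr, hdet, Fintype.card_fin]
    simp only [smul_eq_mul]
    rw [hrho i]
    ring
  -- part (2): iterate
  have hpart2 : ∀ (i : ℕ) (w : ℝ),
      h 0 w = (∏ k ∈ Finset.range i, r (k:ℤ)) ^ 2 * h i w := by
    intro i w
    induction i with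
    | zero => simp
    | succ i ih =>
        rw [ih, hstep2 i w, Finset.prod_range_succ]
        ring
  intro i _ w
  refine ⟨?_, hpart2 i w⟩
  have hBi : (!![0, 1; -r (i:ℤ), -q (i:ℤ)]) = Bmat r q i := rfl
  rw [hBi]
  exact hpart1 i w
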